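/- Let T be a bounded linear operator on a Banach space X commuting with a projection P and satisfying TP = P. If δ_P(T^{n0}) < 1 for some n0 ∈ ℕ, then T is uniformly P-ergodic, i.e. ‖T^n − P‖ → 0; moreover there exist constants C > 0, α > 0 such that ‖T^n − P‖ ≤ C e^{−αn} for all sufficiently large n (assuming ‖T‖ ≤ 1). -/

import Mathlib

open Filter Topology

noncomputable def dobrushin {X : Type*} [NormedAddCommGroup X] [NormedSpace ℝ X]
    (P A : X →L[ℝ] X) : ℝ :=
  sSup {r : ℝ | ∃ x : X, P x = 0 ∧ x ≠ 0 ∧ r = ‖A x‖ / ‖x‖}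

theorem stmt9 {X : Type*} [NormedAddCommGroup X] [NormedSpace ℝ X] [CompleteSpace X]
    (P T : X →L[ℝ] X) (hP : P * P = P) (hT : ‖T‖ ≤ 1) (hcomm : T * P = P * T)
    (hTP : T * P = P) (n0 : ℕ) (hdelta : dobrushin P (T ^ n0) < 1) :
    Tendsto (fun n : ℕ => ‖T ^ n - P‖) atTop (𝓝 0) ∧
      ∃ C > (0 : ℝ), ∃ α > (0 : ℝ), ∃ N : ℕ, ∀ n ≥ N,
        ‖T ^ n - P‖ ≤ C * Real.exp (-α * n) := by
  -- general algebraic facts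
  have hpowP : ∀ m : ℕ, T ^ m * P = P := by
    intro m
    induction m with
    | zero => simp
    | succ k ih => rw [pow_succ, mul_assoc, hTP, ih]
  have hPpow : ∀ m : ℕ, P * T ^ m = T ^ m * P := by
    intro m
    induction m with
    | zero => simp
    | succ k ih =>
      rw [pow_succ, ← mul_assoc, ih, mul_assoc, ← hcomm, ← mul_assoc, ← pow_succ]
  have hkerinv : ∀ (m : ℕ) (y : X), P y = 0 → P ((T ^ m) y) = 0 := by
    intro m y hy
    have : (P * T ^ m) y = (T ^ m * P) y := by rw [hPpow]
    simpa [ContinuousLinearMap.mul_apply, hy] using this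
  have hkey : ∀ (n : ℕ) (x : X), (T ^ n - P) x = (T ^ n) (x - P x) := by
    intro n x
    have h1 : (T ^ n) (P x) = P x := by
      have : (T ^ n * P) x = P x := by rw [hpowP]
      simpa [ContinuousLinearMap.mul_apply] using this
    simp [map_sub, h1]
  have hkerPx : ∀ x : X, P (x - P x) = 0 := by
    intro x
    have : (P * P) x = P x := by rw [hP]
    simp only [ContinuousLinearMap.mul_apply] at this
    simp [map_sub, this]
  have hbdd : BddAbove {r : ℝ | ∃ x : X, P x = 0 ∧ x ≠ 0 ∧ r = ‖(T ^ n0) x‖ / ‖x‖} := by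
    refine ⟨‖T ^ n0‖, ?_⟩
    rintro r ⟨x, -, hx, rfl⟩
    rw [div_le_iff₀ (norm_pos_iff.mpr hx)]
    exact (T ^ n0).le_opNorm x
  have hpownorm : ∀ m : ℕ, ‖T ^ m‖ ≤ 1 := by
    intro m
    induction m with
    | zero => rw [pow_zero]; exact ContinuousLinearMap.norm_id_le
    | succ k ih =>
      calc ‖T ^ (k + 1)‖ = ‖T ^ k * T‖ := by rw [pow_succ]
        _ ≤ ‖T ^ k‖ * ‖T‖ := norm_mul_le _ _
        _ ≤ 1 * 1 := mul_le_mul ih hT (norm_nonneg _) zero_le_one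
        _ = 1 := one_mul 1
  suffices h : ∃ C > (0 : ℝ), ∃ α > (0 : ℝ), ∀ n : ℕ, ‖T ^ n - P‖ ≤ C * Real.exp (-α * n) by
    obtain ⟨C, hC, α, hα, hb⟩ := h
    constructor
    · apply squeeze_zero (fun n => norm_nonneg _) hb
      have h1 : ∀ n : ℕ, C * Real.exp (-α * n) = C * (Real.exp (-α)) ^ n := by
        intro n
        rw [← Real.exp_nat_mul]
        ring_nf
      simp_rw [h1]
      have := tendsto_pow_atTop_nhds_zero_of_lt_one (Real.exp_pos (-α)).le
        (Real.exp_lt_one_iff.mpr (by linarith))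
      simpa using this.const_mul C
    · exact ⟨C, hC, α, hα, 0, fun n _ => hb n⟩
  rcases Nat.eq_zero_or_pos n0 with h0 | h0
  · -- n0 = 0 : ker P is trivial, so T ^ n = P for all n
    have hker : ∀ x : X, P x = 0 → x = 0 := by
      intro x hx
      by_contra hxne
      have h1 : (1 : ℝ) ∈ {r : ℝ | ∃ x : X, P x = 0 ∧ x ≠ 0 ∧ r = ‖(T ^ n0) x‖ / ‖x‖} := by
        refine ⟨x, hx, hxne, ?_⟩
        rw [h0]
        simp [div_self (norm_ne_zero_iff.mpr hxne)]
      have := le_csSup hbdd h1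
      rw [dobrushin] at hdelta
      linarith
    have heq : ∀ n : ℕ, T ^ n - P = 0 := by
      intro n
      ext x
      have hx0 : x - P x = 0 := hker _ (hkerPx x)
      simp [hkey n x, hx0]
    refine ⟨1, one_pos, 1, one_pos, fun n => ?_⟩
    rw [heq n]
    simp [Real.exp_pos]
    positivity
  · -- main case
    set δ : ℝ := max (dobrushin P (T ^ n0)) (1 / 2) with hδdef
    have hδpos : 0 < δ := lt_of_lt_of_le (by norm_num) (le_max_right _ _)
    have hδlt : δ < 1 := max_lt hdelta (by norm_num)
    have hcontr : ∀ y : X, P y = 0 → ‖(T ^ n0) y‖ ≤ δ * ‖y‖ := by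
      intro y hy
      by_cases hy0 : y = 0
      · simp [hy0]
      · have hmem : ‖(T ^ n0) y‖ / ‖y‖ ∈
            {r : ℝ | ∃ x : X, P x = 0 ∧ x ≠ 0 ∧ r = ‖(T ^ n0) x‖ / ‖x‖} := ⟨y, hy, hy0, rfl⟩
        have := le_csSup hbdd hmem
        have h2 : ‖(T ^ n0) y‖ / ‖y‖ ≤ δ := le_trans this (le_max_left _ _)
        rwa [div_le_iff₀ (norm_pos_iff.mpr hy0)] at h2
    have hiter : ∀ (k : ℕ) (y : X), P y = 0 → ‖(T ^ (n0 * k)) y‖ ≤ δ ^ k * ‖y‖ := by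
      intro k
      induction k with
      | zero => intro y hy; simp
      | succ j ih =>
        intro y hy
        have hz : P ((T ^ (n0 * j)) y) = 0 := hkerinv _ y hy
        have h1 : (T ^ (n0 * (j + 1))) y = (T ^ n0) ((T ^ (n0 * j)) y) := by
          have : T ^ (n0 * (j + 1)) = T ^ n0 * T ^ (n0 * j) := by
            rw [← pow_add]; ring_nf
          rw [this, ContinuousLinearMap.mul_apply]
        calc ‖(T ^ (n0 * (j + 1))) y‖ = ‖(T ^ n0) ((T ^ (n0 * j)) y)‖ := by rw [h1]
          _ ≤ δ * ‖(T ^ (n0 * j)) y‖ := hcontr _ hz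
          _ ≤ δ * (δ ^ j * ‖y‖) := by
              exact mul_le_mul_of_nonneg_left (ih y hy) hδpos.le
          _ = δ ^ (j + 1) * ‖y‖ := by ring
    have hbound : ∀ n : ℕ, ‖T ^ n - P‖ ≤ (1 + ‖P‖) * δ ^ (n / n0) := by
      intro n
      apply ContinuousLinearMap.opNorm_le_bound
      · positivity
      intro x
      rw [hkey n x]
      set z := x - P x with hz
      have hz0 : P z = 0 := hkerPx x
      have hsplit : (T ^ n) z = (T ^ (n % n0)) ((T ^ (n0 * (n / n0))) z) := by
        have : T ^ n = T ^ (n % n0) * T ^ (n0 * (n / n0)) := by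
          rw [← pow_add, Nat.mod_add_div]
        rw [this, ContinuousLinearMap.mul_apply]
      have hznorm : ‖z‖ ≤ (1 + ‖P‖) * ‖x‖ := by
        calc ‖z‖ = ‖x - P x‖ := rfl
          _ ≤ ‖x‖ + ‖P x‖ := norm_sub_le _ _
          _ ≤ ‖x‖ + ‖P‖ * ‖x‖ := by linarith [P.le_opNorm x]
          _ = (1 + ‖P‖) * ‖x‖ := by ring
      calc ‖(T ^ n) z‖ = ‖(T ^ (n % n0)) ((T ^ (n0 * (n / n0))) z)‖ := by rw [hsplit]
        _ ≤ ‖T ^ (n % n0)‖ * ‖(T ^ (n0 * (n / n0))) z‖ := ContinuousLinearMap.le_opNorm _ _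
        _ ≤ 1 * (δ ^ (n / n0) * ‖z‖) := by
            exact mul_le_mul (hpownorm _) (hiter _ _ hz0) (norm_nonneg _) zero_le_one
        _ = δ ^ (n / n0) * ‖z‖ := by ring
        _ ≤ δ ^ (n / n0) * ((1 + ‖P‖) * ‖x‖) := by
            exact mul_le_mul_of_nonneg_left hznorm (by positivity)
        _ = (1 + ‖P‖) * δ ^ (n / n0) * ‖x‖ := by ring
    set α : ℝ := -(Real.log δ) / n0 with hαdef
    have hlogneg : Real.log δ < 0 := Real.log_neg hδpos hδlt
    have hαpos : 0 < α := by
      apply div_pos (by linarith)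
      exact_mod_cast h0
    refine ⟨(1 + ‖P‖) / δ, by positivity, α, hαpos, fun n => ?_⟩
    refine le_trans (hbound n) ?_
    have hkge : ((n / n0 : ℕ) : ℝ) > (n : ℝ) / (n0 : ℝ) - 1 := by
      have h1 : n < n0 * (n / n0 + 1) := Nat.lt_mul_div_succ n h0
      have h2 : (n : ℝ) < (n0 : ℝ) * ((n / n0 : ℕ) + 1) := by exact_mod_cast h1
      have hn0pos : (0 : ℝ) < (n0 : ℝ) := by exact_mod_cast h0
      rw [gt_iff_lt, div_sub_one hn0pos.ne', div_lt_iff₀ hn0pos]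
      nlinarith
    have hexp : δ ^ (n / n0) = Real.exp (((n / n0 : ℕ) : ℝ) * Real.log δ) := by
      rw [Real.exp_nat_mul, Real.exp_log hδpos]
    have hmono : Real.exp (((n / n0 : ℕ) : ℝ) * Real.log δ) ≤
        Real.exp (((n : ℝ) / (n0 : ℝ) - 1) * Real.log δ) := by
      apply Real.exp_le_exp.mpr
      exact mul_le_mul_of_nonpos_right hkge.le hlogneg.le
    have heq2 : Real.exp (((n : ℝ) / (n0 : ℝ) - 1) * Real.log δ) =
        Real.exp (-α * n) / δ := by
      rw [eq_div_iff hδpos.ne']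
      rw [← Real.exp_log hδpos, ← Real.exp_add]
      congr 1
      have hn0ne : (n0 : ℝ) ≠ 0 := by exact_mod_cast h0.ne'
      field_simp [hαdef]
      simp only [Real.log_exp]
      rw [hαdef]
      field_simp
      ring
    calc (1 + ‖P‖) * δ ^ (n / n0)
        ≤ (1 + ‖P‖) * (Real.exp (-α * n) / δ) := by
          rw [hexp]
          exact mul_le_mul_of_nonneg_left (heq2 ▸ hmono) (by positivity)
      _ = (1 + ‖P‖) / δ * Real.exp (-α * n) := by ring
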